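/- Van der Corput lemma (first-derivative case): if h is C² on [a,b] with h' monotone and |h'(x)| ≥ A > 0 on [a,b], and φ is C¹ on [a,b], then |∫_a^b e^{i h(x)} φ(x) dx| ≤ c·A^{-1}·(|φ(b)| + ∫_a^b |φ'(x)| dx) for an absolute constant c. -/

import Mathlib

open Set intervalIntegral MeasureTheory Complex Filter Topology

private lemma vdc_mono_deriv_nonneg {f : ℝ → ℝ} {a b x d : ℝ}
    (hf : MonotoneOn f (Ioo a b)) (hx : x ∈ Ioo a b) (hd : HasDerivAt f d x) : 0 ≤ d := by
  have hslope : Tendsto (slope f x) (𝓝[≠] x) (𝓝 d) := hasDerivAt_iff_tendsto_slope.1 hd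
  refine ge_of_tendsto hslope ?_
  have hmem : Ioo a b ∈ 𝓝[≠] x := nhdsWithin_le_nhds (isOpen_Ioo.mem_nhds hx)
  filter_upwards [hmem, self_mem_nhdsWithin] with y hy (hy' : y ≠ x)
  rw [slope_def_field]
  rcases lt_or_gt_of_ne hy' with h1 | h1
  · refine div_nonneg_iff.2 (Or.inr ⟨?_, by linarith⟩)
    simpa using hf hy hx h1.le
  · refine div_nonneg ?_ (by linarith)
    simpa using hf hx hy h1.le

private lemma vdc_le_on_Icc {f : ℝ → ℝ} {a b A : ℝ} (hab : a < b)
    (hf : ContinuousOn f (Icc a b)) (h : ∀ x ∈ Ioo a b, A ≤ f x) :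
    ∀ x ∈ Icc a b, A ≤ f x := by
  intro x hx
  rcases eq_or_lt_of_le hx.1 with rfl | hax
  · have h1 : Tendsto f (𝓝[Ioo a b] a) (𝓝 (f a)) :=
      (hf a hx).mono_left (nhdsWithin_mono _ Ioo_subset_Icc_self)
    rw [nhdsWithin_Ioo_eq_nhdsGT hab] at h1
    refine ge_of_tendsto h1 ?_
    rw [← nhdsWithin_Ioo_eq_nhdsGT hab]
    filter_upwards [self_mem_nhdsWithin] with y hy using h y hy
  rcases eq_or_lt_of_le hx.2 with rfl | hxb
  · have h1 : Tendsto f (𝓝[Ioo a x] x) (𝓝 (f x)) :=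
      (hf x hx).mono_left (nhdsWithin_mono _ Ioo_subset_Icc_self)
    rw [nhdsWithin_Ioo_eq_nhdsLT hax] at h1
    refine ge_of_tendsto h1 ?_
    rw [← nhdsWithin_Ioo_eq_nhdsLT hax]
    filter_upwards [self_mem_nhdsWithin] with y hy using h y hy
  · exact h x ⟨hax, hxb⟩

private lemma vdc_core {A : ℝ} (hA : 0 < A) (a b : ℝ) (h : ℝ → ℝ) (hab : a < b)
    (hcd : ContDiffOn ℝ 2 h (Icc a b))
    (hmono : MonotoneOn (deriv h) (Icc a b) ∨ AntitoneOn (deriv h) (Icc a b))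
    (hAle : ∀ x ∈ Icc a b, A ≤ |deriv h x|) :
    ‖∫ x in a..b, Complex.exp (Complex.I * (h x : ℂ))‖ ≤ 4 / A := by
  have hs : UniqueDiffOn ℝ (Icc a b) := uniqueDiffOn_Icc hab
  set s : Set ℝ := Icc a b with hsdef
  set h₁ : ℝ → ℝ := derivWithin h s with hh₁
  set h₂ : ℝ → ℝ := derivWithin h₁ s with hh₂
  have huIcc : uIcc a b = s := uIcc_of_le hab.le
  have hcd1 : ContDiffOn ℝ 1 h₁ s := hcd.derivWithin hs (by norm_num)
  have h₁cont : ContinuousOn h₁ s := hcd1.continuousOn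
  have hcd0 : ContDiffOn ℝ 0 h₂ s := hcd1.derivWithin hs (by norm_num)
  have h₂cont : ContinuousOn h₂ s := hcd0.continuousOn
  have h₁diff : ∀ x ∈ s, HasDerivWithinAt h₁ (h₂ x) s x := fun x hx =>
    ((hcd1.differentiableOn one_ne_zero) x hx).hasDerivWithinAt
  have hdiff : ∀ x ∈ s, HasDerivWithinAt h (h₁ x) s x := fun x hx =>
    ((hcd.differentiableOn (by norm_num)) x hx).hasDerivWithinAt
  have heq : ∀ x ∈ Ioo a b, h₁ x = deriv h x := fun x hx =>
    derivWithin_of_mem_nhds (Icc_mem_nhds hx.1 hx.2)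
  -- lower bound on |h₁| on all of Icc
  have hA1 : ∀ x ∈ s, A ≤ |h₁ x| := by
    refine vdc_le_on_Icc hab (continuous_abs.comp_continuousOn h₁cont) ?_
    intro x hx
    rw [heq x hx]
    exact hAle x (Ioo_subset_Icc_self hx)
  have h₁ne : ∀ x ∈ s, h₁ x ≠ 0 := fun x hx => by
    intro hzero
    have := hA1 x hx
    rw [hzero] at this
    simp at this
    linarith
  -- h₂ has constant sign on Icc
  have h₂sign : (∀ x ∈ s, 0 ≤ h₂ x) ∨ (∀ x ∈ s, h₂ x ≤ 0) := by
    have key : ∀ x ∈ Ioo a b, HasDerivAt h₁ (h₂ x) x := fun x hx =>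
      (h₁diff x (Ioo_subset_Icc_self hx)).hasDerivAt (Icc_mem_nhds hx.1 hx.2)
    rcases hmono with hm | hm
    · left
      refine vdc_le_on_Icc hab h₂cont ?_
      intro x hx
      refine vdc_mono_deriv_nonneg (f := h₁) ?_ hx (key x hx)
      intro u hu v hv huv
      rw [heq u hu, heq v hv]
      exact hm (Ioo_subset_Icc_self hu) (Ioo_subset_Icc_self hv) huv
    · right
      refine fun x hx => ?_
      have h0 : (0:ℝ) ≤ -h₂ x := by
        refine vdc_le_on_Icc hab (h₂cont.neg) ?_ x hx
        intro y hy
        have : 0 ≤ -h₂ y := by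
          have := vdc_mono_deriv_nonneg (f := fun t => -h₁ t) (a := a) (b := b) ?_ hy
            ((key y hy).neg)
          · simpa using this
          · intro u hu v hv huv
            simp only [neg_le_neg_iff]
            rw [heq u hu, heq v hv]
            exact hm (Ioo_subset_Icc_self hu) (Ioo_subset_Icc_self hv) huv
        simpa using this
      linarith
  
  -- the reciprocal g = 1/h₁ and its derivative
  set g : ℝ → ℝ := fun x => (h₁ x)⁻¹ with hgdef
  set g' : ℝ → ℝ := fun x => -h₂ x / (h₁ x) ^ 2 with hg'def
  have hgd : ∀ x ∈ s, HasDerivWithinAt g (g' x) s x := fun x hx =>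
    (h₁diff x hx).inv (h₁ne x hx)
  have hgcont : ContinuousOn g s := h₁cont.inv₀ h₁ne
  have hg'cont : ContinuousOn g' s :=
    (h₂cont.neg).div (h₁cont.pow 2) (fun x hx => pow_ne_zero 2 (h₁ne x hx))
  have hgbound : ∀ x ∈ s, |g x| ≤ A⁻¹ := by
    intro x hx
    rw [hgdef]
    simp only [abs_inv]
    exact inv_anti₀ hA (hA1 x hx)
  -- ∫ g' = g b - g a
  have hg'int : IntervalIntegrable g' volume a b := by
    apply ContinuousOn.intervalIntegrable
    rwa [huIcc]
  have hftc : ∫ x in a..b, g' x = g b - g a := by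
    apply integral_eq_sub_of_hasDeriv_right_of_le hab.le hgcont _ hg'int
    intro x hx
    exact ((hgd x (Ioo_subset_Icc_self hx)).hasDerivAt
      (Icc_mem_nhds hx.1 hx.2)).hasDerivWithinAt
  -- ∫ |g'| ≤ 2/A
  have habs : ∫ x in a..b, |g' x| ≤ 2 / A := by
    have hb2 : |g b - g a| ≤ 2 / A := by
      have h1 := hgbound a (left_mem_Icc.2 hab.le)
      have h2 := hgbound b (right_mem_Icc.2 hab.le)
      have : (2:ℝ) / A = A⁻¹ + A⁻¹ := by rw [div_eq_mul_inv]; ring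
      rw [this]
      calc |g b - g a| ≤ |g b| + |g a| := abs_sub _ _
        _ ≤ A⁻¹ + A⁻¹ := add_le_add h2 h1
    rcases h₂sign with hsg | hsg
    · -- g' ≤ 0 on s, so |g'| = -g'
      have : ∫ x in a..b, |g' x| = ∫ x in a..b, -g' x := by
        apply integral_congr
        intro x hx
        rw [huIcc] at hx
        have : g' x ≤ 0 := by
          rw [hg'def]
          apply div_nonpos_of_nonpos_of_nonneg
          · simpa using hsg x hx
          · positivity
        exact abs_of_nonpos this
      rw [this, intervalIntegral.integral_neg, hftc]
      calc -(g b - g a) ≤ |g b - g a| := neg_le_abs _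
        _ ≤ 2 / A := hb2
    · have : ∫ x in a..b, |g' x| = ∫ x in a..b, g' x := by
        apply integral_congr
        intro x hx
        rw [huIcc] at hx
        have : 0 ≤ g' x := by
          rw [hg'def]
          apply div_nonneg _ (by positivity)
          simpa using hsg x hx
        exact _root_.abs_of_nonneg this
      rw [this, hftc]
      calc g b - g a ≤ |g b - g a| := le_abs_self _
        _ ≤ 2 / A := hb2
  -- integration by parts setup
  set u : ℝ → ℂ := fun x => (Complex.I * (h₁ x : ℂ))⁻¹ with hudef
  set u' : ℝ → ℂ := fun x => -(Complex.I * (h₂ x : ℂ)) / (Complex.I * (h₁ x : ℂ)) ^ 2 with hu'def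
  set v : ℝ → ℂ := fun x => Complex.exp (Complex.I * (h x : ℂ)) with hvdef
  set v' : ℝ → ℂ := fun x => Complex.exp (Complex.I * (h x : ℂ)) * (Complex.I * (h₁ x : ℂ)) with hv'def
  have hIne : ∀ x ∈ s, Complex.I * (h₁ x : ℂ) ≠ 0 := by
    intro x hx
    simp [Complex.I_ne_zero, Complex.ofReal_eq_zero, h₁ne x hx]
  have hud : ∀ x ∈ s, HasDerivWithinAt u (u' x) s x := by
    intro x hx
    have h1 : HasDerivWithinAt (fun y => (h₁ y : ℂ)) ((h₂ x : ℂ)) s x := by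
      simpa using (HasDerivWithinAt.ofReal_comp (h₁diff x hx))
    have h2 : HasDerivWithinAt (fun y => Complex.I * (h₁ y : ℂ)) (Complex.I * (h₂ x : ℂ)) s x :=
      h1.const_mul Complex.I
    have h3 := (hasDerivWithinAt_const x s (1:ℂ)).div h2 (hIne x hx)
    simp only [Pi.div_def, zero_mul, one_mul, zero_sub, one_div] at h3
    exact h3
  have hvd : ∀ x ∈ s, HasDerivWithinAt v (v' x) s x := by
    intro x hx
    have h1 : HasDerivWithinAt (fun y => (h y : ℂ)) ((h₁ x : ℂ)) s x := by
      simpa using (HasDerivWithinAt.ofReal_comp (hdiff x hx))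
    have h2 : HasDerivWithinAt (fun y => Complex.I * (h y : ℂ)) (Complex.I * (h₁ x : ℂ)) s x :=
      h1.const_mul Complex.I
    exact h2.cexp
  have hucont : ContinuousOn u s := fun x hx => ((hud x hx).continuousWithinAt)
  have hvcont : ContinuousOn v s := fun x hx => ((hvd x hx).continuousWithinAt)
  have hc1 : ContinuousOn (fun x => (h₁ x : ℂ)) s := Complex.continuous_ofReal.comp_continuousOn h₁cont
  have hc2 : ContinuousOn (fun x => (h₂ x : ℂ)) s := Complex.continuous_ofReal.comp_continuousOn h₂cont
  have hu'cont : ContinuousOn u' s := by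
    apply ContinuousOn.div
    · exact (continuousOn_const.mul hc2).neg
    · exact (continuousOn_const.mul hc1).pow 2
    · exact fun x hx => pow_ne_zero 2 (hIne x hx)
  have hv'cont : ContinuousOn v' s := hvcont.mul (continuousOn_const.mul hc1)
  have hu'int : IntervalIntegrable u' volume a b := by
    apply ContinuousOn.intervalIntegrable; rwa [huIcc]
  have hv'int : IntervalIntegrable v' volume a b := by
    apply ContinuousOn.intervalIntegrable; rwa [huIcc]
  -- integration by parts
  have hibp : ∫ x in a..b, u x * v' x = u b * v b - u a * v a - ∫ x in a..b, u' x * v x := by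
    apply integral_mul_deriv_eq_deriv_mul_of_hasDerivAt
    · rwa [huIcc]
    · rwa [huIcc]
    · rw [min_eq_left hab.le, max_eq_right hab.le]
      intro x hx
      exact (hud x (Ioo_subset_Icc_self hx)).hasDerivAt (Icc_mem_nhds hx.1 hx.2)
    · rw [min_eq_left hab.le, max_eq_right hab.le]
      intro x hx
      exact (hvd x (Ioo_subset_Icc_self hx)).hasDerivAt (Icc_mem_nhds hx.1 hx.2)
    · exact hu'int
    · exact hv'int
  -- the integrand equals u * v'
  have hcongr : ∫ x in a..b, Complex.exp (Complex.I * (h x : ℂ)) = ∫ x in a..b, u x * v' x := by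
    apply integral_congr
    intro x hx
    rw [huIcc] at hx
    show Complex.exp (Complex.I * (h x : ℂ)) = u x * v' x
    rw [hudef, hv'def]
    have hne : (h₁ x : ℂ) ≠ 0 := Complex.ofReal_ne_zero.2 (h₁ne x hx)
    field_simp
  -- norms
  have hnormv : ∀ x : ℝ, ‖v x‖ = 1 := by
    intro x
    rw [hvdef]
    simp [Complex.norm_exp]
  have hnormu : ∀ x ∈ s, ‖u x‖ ≤ A⁻¹ := by
    intro x hx
    rw [hudef]
    simp only [norm_inv, norm_mul, Complex.norm_I, one_mul, Complex.norm_real,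
      Real.norm_eq_abs]
    rw [← abs_inv]
    exact hgbound x hx
  have hnormu' : ∀ x ∈ s, ‖u' x * v x‖ = |g' x| := by
    intro x hx
    rw [norm_mul, hnormv x, mul_one, hu'def, hg'def]
    simp only [norm_div, norm_neg, norm_mul, norm_pow, Complex.norm_I, one_mul,
      Complex.norm_real, Real.norm_eq_abs]
    rw [abs_div, abs_neg, _root_.abs_pow]
  -- put it together
  have hintnorm : ‖∫ x in a..b, u' x * v x‖ ≤ 2 / A := by
    calc ‖∫ x in a..b, u' x * v x‖ ≤ ∫ x in a..b, ‖u' x * v x‖ :=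
          norm_integral_le_integral_norm hab.le
      _ = ∫ x in a..b, |g' x| := by
          apply integral_congr
          intro x hx
          rw [huIcc] at hx
          exact hnormu' x hx
      _ ≤ 2 / A := habs
  rw [hcongr, hibp]
  have hb1 : ‖u b * v b‖ ≤ A⁻¹ := by
    rw [norm_mul, hnormv b, mul_one]; exact hnormu b (right_mem_Icc.2 hab.le)
  have ha1 : ‖u a * v a‖ ≤ A⁻¹ := by
    rw [norm_mul, hnormv a, mul_one]; exact hnormu a (left_mem_Icc.2 hab.le)
  calc ‖u b * v b - u a * v a - ∫ x in a..b, u' x * v x‖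
      ≤ ‖u b * v b - u a * v a‖ + ‖∫ x in a..b, u' x * v x‖ := norm_sub_le _ _
    _ ≤ (‖u b * v b‖ + ‖u a * v a‖) + ‖∫ x in a..b, u' x * v x‖ := by
        gcongr; exact norm_sub_le _ _
    _ ≤ (A⁻¹ + A⁻¹) + 2 / A := by gcongr
    _ = 4 / A := by field_simp; ring

/-- Van der Corput lemma, first-derivative case: if h is C² on [a,b] with h' monotone
    and |h'| ≥ A > 0, and φ is C¹, then |∫ e^{ih} φ| ≤ c A⁻¹ (|φ(b)| + ∫ |φ'|). -/
theorem van_der_corput_first :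
    ∃ c : ℝ, 0 < c ∧ ∀ (a b A : ℝ) (h : ℝ → ℝ) (φ : ℝ → ℂ),
      a < b → 0 < A →
      ContDiffOn ℝ 2 h (Icc a b) →
      (MonotoneOn (deriv h) (Icc a b) ∨ AntitoneOn (deriv h) (Icc a b)) →
      (∀ x ∈ Icc a b, A ≤ |deriv h x|) →
      ContDiffOn ℝ 1 φ (Icc a b) →
      ‖∫ x in a..b, Complex.exp (Complex.I * (h x : ℂ)) * φ x‖ ≤
        c * A⁻¹ * (‖φ b‖ + ∫ x in a..b, ‖deriv φ x‖) := by
  refine ⟨4, by norm_num, ?_⟩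
  intro a b A h φ hab hA hcd hmono hAle hφ
  have hs : UniqueDiffOn ℝ (Icc a b) := uniqueDiffOn_Icc hab
  set s : Set ℝ := Icc a b with hsdef
  have huIcc : uIcc a b = s := uIcc_of_le hab.le
  set e : ℝ → ℂ := fun x => Complex.exp (Complex.I * (h x : ℂ)) with hedef
  have hecont : ContinuousOn e s := by
    apply Complex.continuous_exp.comp_continuousOn
    exact continuousOn_const.mul (Complex.continuous_ofReal.comp_continuousOn hcd.continuousOn)
  have heint : IntervalIntegrable e volume a b := by
    apply ContinuousOn.intervalIntegrable; rwa [huIcc]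
  set G : ℝ → ℂ := fun x => ∫ t in a..x, e t with hGdef
  -- bound on G
  have hGbound : ∀ x ∈ s, ‖G x‖ ≤ 4 / A := by
    intro x hx
    rcases eq_or_lt_of_le hx.1 with rfl | hax
    · simp [hGdef, integral_same]
      positivity
    · exact vdc_core hA a x h hax (hcd.mono (Icc_subset_Icc le_rfl hx.2))
        (hmono.imp (fun hm => hm.mono (Icc_subset_Icc le_rfl hx.2))
          (fun hm => hm.mono (Icc_subset_Icc le_rfl hx.2)))
        (fun y hy => hAle y ⟨hy.1, hy.2.trans hx.2⟩)
  -- continuity and derivative of G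
  have hGcont : ContinuousOn G s := by
    rw [← huIcc]
    apply continuousOn_primitive_interval
    rw [huIcc]
    exact hecont.integrableOn_Icc
  have hGd : ∀ x ∈ Ioo a b, HasDerivAt G (e x) x := by
    intro x hx
    apply integral_hasDerivAt_right (heint.mono_set ?_)
      ⟨s, Icc_mem_nhds hx.1 hx.2, hecont.aestronglyMeasurable measurableSet_Icc⟩
      ((hecont x (Ioo_subset_Icc_self hx)).continuousAt (Icc_mem_nhds hx.1 hx.2))
    rw [huIcc, uIcc_of_le hx.1.le]
    exact Icc_subset_Icc le_rfl hx.2.le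
  -- derivative of φ
  set φ₁ : ℝ → ℂ := derivWithin φ s with hφ₁def
  have hφcd0 : ContDiffOn ℝ 0 φ₁ s := hφ.derivWithin hs (by norm_num)
  have hφ₁cont : ContinuousOn φ₁ s := hφcd0.continuousOn
  have hφd : ∀ x ∈ Ioo a b, HasDerivAt φ (φ₁ x) x := fun x hx =>
    (((hφ.differentiableOn one_ne_zero) x (Ioo_subset_Icc_self hx)).hasDerivWithinAt).hasDerivAt
      (Icc_mem_nhds hx.1 hx.2)
  have hφ₁int : IntervalIntegrable φ₁ volume a b := by
    apply ContinuousOn.intervalIntegrable; rwa [huIcc]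
  -- integration by parts
  have hibp : ∫ x in a..b, φ x * e x = φ b * G b - φ a * G a - ∫ x in a..b, φ₁ x * G x := by
    apply integral_mul_deriv_eq_deriv_mul_of_hasDerivAt
    · rw [huIcc]; exact hφ.continuousOn
    · rw [huIcc]; exact hGcont
    · rw [min_eq_left hab.le, max_eq_right hab.le]; exact hφd
    · rw [min_eq_left hab.le, max_eq_right hab.le]; exact hGd
    · exact hφ₁int
    · exact heint
  have hGa : G a = 0 := integral_same
  -- rewrite the target integrand
  have hswap : ∫ x in a..b, Complex.exp (Complex.I * (h x : ℂ)) * φ x = ∫ x in a..b, φ x * e x := by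
    apply integral_congr
    intro x hx
    exact mul_comm _ _
  -- bound the inner integral
  have hnorm1 : ‖∫ x in a..b, φ₁ x * G x‖ ≤ (∫ x in a..b, ‖φ₁ x‖) * (4 / A) := by
    calc ‖∫ x in a..b, φ₁ x * G x‖ ≤ ∫ x in a..b, ‖φ₁ x * G x‖ :=
          norm_integral_le_integral_norm hab.le
      _ ≤ ∫ x in a..b, ‖φ₁ x‖ * (4 / A) := by
          apply integral_mono_on hab.le
          · apply ContinuousOn.intervalIntegrable
            rw [huIcc]
            exact (hφ₁cont.norm.mul hGcont.norm).congr (fun x hx => (norm_mul _ _))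
          · apply ContinuousOn.intervalIntegrable
            rw [huIcc]
            exact hφ₁cont.norm.mul continuousOn_const
          · intro x hx
            rw [norm_mul]
            exact mul_le_mul_of_nonneg_left (hGbound x hx) (norm_nonneg _)
      _ = (∫ x in a..b, ‖φ₁ x‖) * (4 / A) := by
          rw [← intervalIntegral.integral_mul_const]
  -- the RHS integral equals the integral of ‖φ₁‖
  have hae : ∫ x in a..b, ‖deriv φ x‖ = ∫ x in a..b, ‖φ₁ x‖ := by
    apply intervalIntegral.integral_congr_ae
    have hb : ∀ᵐ x : ℝ, x ≠ b := by
      have : (volume : Measure ℝ) {b} = 0 := measure_singleton b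
      rw [MeasureTheory.ae_iff]
      convert this using 2
      ext x
      simp
    filter_upwards [hb] with x hxb hx
    rw [uIoc_of_le hab.le] at hx
    have hx' : x ∈ Ioo a b := ⟨hx.1, lt_of_le_of_ne hx.2 hxb⟩
    congr 1
    exact ((hφd x hx').deriv).symm ▸ rfl
  -- conclusion
  have hφ₁nonneg : 0 ≤ ∫ x in a..b, ‖φ₁ x‖ :=
    intervalIntegral.integral_nonneg hab.le (fun x _ => norm_nonneg _)
  rw [hswap, hibp, hGa, mul_zero, sub_zero, hae]
  calc ‖φ b * G b - ∫ x in a..b, φ₁ x * G x‖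
      ≤ ‖φ b * G b‖ + ‖∫ x in a..b, φ₁ x * G x‖ := norm_sub_le _ _
    _ ≤ ‖φ b‖ * (4 / A) + (∫ x in a..b, ‖φ₁ x‖) * (4 / A) := by
        refine add_le_add ?_ hnorm1
        rw [norm_mul]
        exact mul_le_mul_of_nonneg_left (hGbound b (right_mem_Icc.2 hab.le)) (norm_nonneg _)
    _ = 4 * A⁻¹ * (‖φ b‖ + ∫ x in a..b, ‖φ₁ x‖) := by
        field_simp
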